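/- Let k ≥ 1. If the cop at vertex c has k-cornered the robber at vertex r₀, then for every robber move r₁ ∈ N[r₀] there exists a cop move c₁ ∈ N[c] such that c₁ has k-caught r₁, i.e. c₁ ∈ Fₖ(r₁). -/

import Mathlib

open Classical

/-- A finite reflexive graph: adjacency is symmetric and every vertex is
adjacent to itself (closed neighborhood `N[v] = {u | Adj v u}`). -/
structure RefGraph (V : Type*) where
  Adj : V → V → Prop
  symm : ∀ u v, Adj u v → Adj v u
  refl : ∀ v, Adj v v

namespace RefGraph

variable {V : Type*}

/-- `w` strictly corners `v` within the induced subgraph on `S`,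
i.e. `N_S[v] ⊊ N_S[w]`. -/
def StrictCornersIn (G : RefGraph V) (S : Set V) (w v : V) : Prop :=
  w ∈ S ∧ v ∈ S ∧ (∀ u ∈ S, G.Adj v u → G.Adj w u) ∧ ∃ u ∈ S, G.Adj w u ∧ ¬ G.Adj v u

/-- `v` is a strict corner of the induced subgraph on `S`. -/
def IsStrictCorner (G : RefGraph V) (S : Set V) (v : V) : Prop :=
  ∃ w, G.StrictCornersIn S w v

/-- `S` induces a clique. -/
def IsCliqueSet (G : RefGraph V) (S : Set V) : Prop :=
  ∀ u ∈ S, ∀ v ∈ S, G.Adj u v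

/-- `lvl k` is the vertex set of the graph `G_{k+1}` of the corner ranking
procedure: start with all vertices and repeatedly delete all strict corners. -/
def lvl (G : RefGraph V) : ℕ → Set V
  | 0 => Set.univ
  | k + 1 => {v ∈ G.lvl k | ¬ G.IsStrictCorner (G.lvl k) v}

/-- The corner rank of a vertex: the stage (1-indexed) at which it is a strict
corner, or at which the remaining graph is a clique; `∞` if neither ever occurs. -/
noncomputable def cr (G : RefGraph V) (v : V) : ℕ∞ :=
  sInf {n : ℕ∞ | ∃ m : ℕ, n = (m : ℕ∞) + 1 ∧ v ∈ G.lvl m ∧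
    (G.IsStrictCorner (G.lvl m) v ∨ G.IsCliqueSet (G.lvl m))}

/-- The vertex set of `Gₖ`: the vertices of corner rank at least `k`. -/
def GkSet (G : RefGraph V) (k : ℕ) : Set V := {v | (k : ℕ∞) ≤ G.cr v}

/-- The corner rank of the graph: the largest corner rank of a vertex. -/
noncomputable def crGraph (G : RefGraph V) [Fintype V] : ℕ∞ :=
  Finset.univ.sup fun v => G.cr v

/-- The projection map `fₖ` on a single vertex `u` of `Gₖ`. -/
noncomputable def fk (G : RefGraph V) (k : ℕ) (u : V) : Set V :=
  if (k : ℕ∞) < G.cr u then {u}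
  else {w | w ∈ G.GkSet (k + 1) ∧ G.StrictCornersIn (G.GkSet k) w u}

/-- The projection map `Fₖ`: `F₁` is the identity and `Fₖ₊₁ = fₖ ∘ Fₖ`. -/
noncomputable def Fk (G : RefGraph V) : ℕ → V → Set V
  | 0, v => {v}
  | 1, v => {v}
  | k + 2, v => ⋃ u ∈ G.Fk (k + 1) v, G.fk (k + 1) u

/-- `r` is `k`-cornered by `c`: for `k = 0`, `c = r`; for `k ≥ 1`, some
`r' ∈ Fₖ(r)` is cornered by `c` in the subgraph induced by `V(Gₖ) ∪ {c}`. -/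
def kCornered (G : RefGraph V) : ℕ → V → V → Prop
  | 0, c, r => c = r
  | k + 1, c, r => ∃ r' ∈ G.Fk (k + 1) r,
      ∀ u, (u ∈ G.GkSet (k + 1) ∨ u = c) → G.Adj r' u → G.Adj c u

/-- With the cop at `c`, the vertex `r` is `k`-proj-safe: `cr r ≥ k` and some
`c' ∈ Fₖ(c)` is not adjacent to `r`. -/
def ProjSafe (G : RefGraph V) (k : ℕ) (c r : V) : Prop :=
  (k : ℕ∞) ≤ G.cr r ∧ ∃ c' ∈ G.Fk k c, ¬ G.Adj c' r

/-- The cop at `c` can win within `k` cop moves against the robber at `r`,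
robber to move. -/
def WinWithin (G : RefGraph V) : ℕ → V → V → Prop
  | 0, c, r => c = r
  | k + 1, c, r => c = r ∨ ∀ r₁, G.Adj r r₁ → ∃ c₁, G.Adj c c₁ ∧ G.WinWithin k c₁ r₁

/-- The cop at `c` can guarantee catching the robber at `r` within `n` cop
moves, cop to move. -/
def CanCatch (G : RefGraph V) : ℕ → V → V → Prop
  | 0, c, r => c = r
  | n + 1, c, r => c = r ∨ ∃ c', G.Adj c c' ∧
      (c' = r ∨ ∀ r', G.Adj r r' → G.CanCatch n c' r')

/-- The cop has a winning strategy: some initial placement from which she can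
guarantee capture in some bounded number of moves, whatever the robber does. -/
def CopWin (G : RefGraph V) : Prop :=
  ∃ (n : ℕ) (c₀ : V), ∀ r₀ : V, G.CanCatch n c₀ r₀

/-- The capture time: the least `n` such that the cop has an initial placement
guaranteeing capture within `n` cop moves. -/
noncomputable def capt (G : RefGraph V) : ℕ :=
  sInf {n : ℕ | ∃ c₀ : V, ∀ r₀ : V, G.CanCatch n c₀ r₀}

/-- A graph of finite corner rank `α` is `1`-cop-win if some vertex of corner
rank `α` is adjacent to every vertex of `G_{α-1}`. -/
def OneCopWin (G : RefGraph V) (α : ℕ) : Prop :=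
  ∃ x, G.cr x = (α : ℕ∞) ∧ ∀ u, ((α - 1 : ℕ) : ℕ∞) ≤ G.cr u → G.Adj x u

/-- `r`-cop-win for `r ∈ {0,1}`. -/
def RCopWin (G : RefGraph V) (r α : ℕ) : Prop :=
  (r = 1 ∧ G.OneCopWin α) ∨ (r = 0 ∧ ¬ G.OneCopWin α)

/-- The largest finite corner rank occurring in `G` (0 if none occurs). -/
noncomputable def gammaMax (G : RefGraph V) : ℕ :=
  sSup {n : ℕ | ∃ v, G.cr v = (n : ℕ∞)}

/-- `F_∞`: equal to `F_{γ+1}` where `γ` is the largest finite corner rank, and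
the identity (`F₁`) when no vertex has finite corner rank. -/
noncomputable def Finf (G : RefGraph V) : V → Set V :=
  G.Fk (G.gammaMax + 1)

/-- `e` lists the vertices as a dismantling ordering: every vertex except the
last is cornered, in the induced subgraph on it and the later vertices, by some
later vertex. -/
def IsDismantlingOrdering (G : RefGraph V) {n : ℕ} (e : Fin n ≃ V) : Prop :=
  ∀ i : Fin n, (i : ℕ) + 1 < n →
    ∃ j : Fin n, i < j ∧ e j ≠ e i ∧
      ∀ u, (∃ m : Fin n, i ≤ m ∧ e m = u) → G.Adj (e i) u → G.Adj (e j) u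

/-- `G` has a dismantling ordering. -/
def HasDismantling (G : RefGraph V) [Fintype V] : Prop :=
  ∃ e : Fin (Fintype.card V) ≃ V, G.IsDismantlingOrdering e

end RefGraph

namespace RefGraph

variable {V : Type*}

lemma lvl_succ_subset (G : RefGraph V) (k : ℕ) : G.lvl (k+1) ⊆ G.lvl k :=
  fun _ hv => hv.1

lemma lvl_antitone (G : RefGraph V) {m n : ℕ} (h : m ≤ n) : G.lvl n ⊆ G.lvl m := by
  induction n with
  | zero =>
    have : m = 0 := Nat.le_zero.mp h
    subst this; exact fun v hv => hv
  | succ n ih =>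
    rcases Nat.lt_or_ge m (n+1) with h' | h'
    · exact fun v hv => ih (Nat.lt_succ_iff.mp h') (G.lvl_succ_subset n hv)
    · have : m = n+1 := le_antisymm h h'
      subst this; exact fun v hv => hv

lemma strict_corner_of_not_mem (G : RefGraph V) {k : ℕ} {v : V}
    (hv : v ∈ G.lvl k) (hv' : v ∉ G.lvl (k+1)) : G.IsStrictCorner (G.lvl k) v := by
  by_contra hno
  exact hv' ⟨hv, hno⟩

lemma cr_le_of_not_mem_lvl (G : RefGraph V) :
    ∀ (k : ℕ) (v : V), v ∉ G.lvl k → G.cr v ≤ (k : ℕ∞) := by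
  intro k
  induction k with
  | zero => intro v hv; exact absurd (Set.mem_univ v) hv
  | succ k ih =>
    intro v hv
    by_cases hvk : v ∈ G.lvl k
    · have hsc := G.strict_corner_of_not_mem hvk hv
      have : G.cr v ≤ (k : ℕ∞) + 1 := sInf_le ⟨k, rfl, hvk, Or.inl hsc⟩
      simpa [Nat.cast_add_one] using this
    · calc G.cr v ≤ (k : ℕ∞) := ih v hvk
        _ ≤ ((k+1 : ℕ) : ℕ∞) := by
          push_cast; exact le_self_add

lemma mem_lvl_of_le_cr (G : RefGraph V) {k : ℕ} {v : V}
    (h : ((k+1 : ℕ) : ℕ∞) ≤ G.cr v) : v ∈ G.lvl k := by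
  by_contra hv
  have h1 := G.cr_le_of_not_mem_lvl k v hv
  have h2 : ((k+1:ℕ) : ℕ∞) ≤ (k : ℕ∞) := le_trans h h1
  have : (k:ℕ) + 1 ≤ k := by exact_mod_cast h2
  omega

lemma le_cr_of_mem_lvl (G : RefGraph V) {k : ℕ} {v : V}
    (hnc : ∀ j < k, ¬ G.IsCliqueSet (G.lvl j)) (hv : v ∈ G.lvl k) :
    ((k+1 : ℕ) : ℕ∞) ≤ G.cr v := by
  apply le_sInf
  rintro n ⟨m, rfl, hm, hprop⟩
  rcases Nat.lt_or_ge m k with hmk | hmk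
  · exfalso
    rcases hprop with hsc | hcl
    · -- v is a strict corner of lvl m, but v ∈ lvl (m+1)
      have hmem : v ∈ G.lvl (m+1) := G.lvl_antitone hmk hv
      exact hmem.2 hsc
    · exact hnc m hmk hcl
  · push_cast
    have : (k : ℕ∞) ≤ (m : ℕ∞) := by exact_mod_cast hmk
    exact add_le_add_left this 1

lemma cr_le_of_clique (G : RefGraph V) {j : ℕ} (hj : G.IsCliqueSet (G.lvl j)) (v : V) :
    G.cr v ≤ ((j+1 : ℕ) : ℕ∞) := by
  by_cases hv : v ∈ G.lvl j
  · have : G.cr v ≤ (j : ℕ∞) + 1 := sInf_le ⟨j, rfl, hv, Or.inr hj⟩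
    simpa [Nat.cast_add_one] using this
  · calc G.cr v ≤ (j : ℕ∞) := G.cr_le_of_not_mem_lvl j v hv
      _ ≤ ((j+1:ℕ) : ℕ∞) := by push_cast; exact le_self_add

lemma noClique_of_gk (G : RefGraph V) {k : ℕ} {v : V}
    (hv : v ∈ G.GkSet (k+1)) : ∀ j < k, ¬ G.IsCliqueSet (G.lvl j) := by
  intro j hj hcl
  have h1 : ((k+1 : ℕ) : ℕ∞) ≤ G.cr v := hv
  have h2 : G.cr v ≤ ((j+1 : ℕ) : ℕ∞) := G.cr_le_of_clique hcl v
  have : (k:ℕ) + 1 ≤ j + 1 := by exact_mod_cast le_trans h1 h2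
  omega

lemma gk_eq_lvl (G : RefGraph V) {k : ℕ}
    (hnc : ∀ j < k, ¬ G.IsCliqueSet (G.lvl j)) : G.GkSet (k+1) = G.lvl k := by
  ext v
  constructor
  · intro hv; exact G.mem_lvl_of_le_cr hv
  · intro hv; exact G.le_cr_of_mem_lvl hnc hv

lemma one_le_cr (G : RefGraph V) (v : V) : (1 : ℕ∞) ≤ G.cr v := by
  apply le_sInf
  rintro n ⟨m, rfl, -, -⟩
  exact le_add_self

lemma fk_subset (G : RefGraph V) (k : ℕ) (u : V) :
    G.fk k u ⊆ G.GkSet (k+1) := by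
  intro w hw
  unfold fk at hw
  split_ifs at hw with hcr
  · have : w = u := hw
    subst this
    show ((k+1 : ℕ) : ℕ∞) ≤ G.cr w
    have hk : (k : ℕ∞) ≠ ⊤ := by simp
    push_cast
    exact Order.add_one_le_of_lt hcr
  · exact hw.1

lemma Fk_subset (G : RefGraph V) : ∀ (k : ℕ) (r : V), G.Fk (k+1) r ⊆ G.GkSet (k+1) := by
  intro k
  induction k with
  | zero =>
    intro r w hw
    have : w = r := hw
    subst this
    show ((1:ℕ) : ℕ∞) ≤ G.cr w
    simpa using G.one_le_cr w
  | succ k ih =>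
    intro r w hw
    show w ∈ G.GkSet (k+2)
    rw [show G.Fk (k+2) r = ⋃ u ∈ G.Fk (k+1) r, G.fk (k+1) u from rfl] at hw
    simp only [Set.mem_iUnion] at hw
    obtain ⟨u, _, hw⟩ := hw
    exact G.fk_subset (k+1) u hw

open Classical in
lemma exists_max_corner (G : RefGraph V) [Fintype V] (S : Set V) (v : V)
    (h : G.IsStrictCorner S v) :
    ∃ w, G.StrictCornersIn S w v ∧ ¬ G.IsStrictCorner S w := by
  classical
  obtain ⟨w₀, hw₀S, hvS, hsub₀, u₀, hu₀S, hadj₀, hnadj₀⟩ := h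
  set N : V → Finset V := fun x => Finset.univ.filter (fun u => u ∈ S ∧ G.Adj x u) with hN
  have hNmem : ∀ x u, u ∈ N x ↔ (u ∈ S ∧ G.Adj x u) := by
    intro x u; simp [hN]
  set T : Finset V := Finset.univ.filter
    (fun w => w ∈ S ∧ ∀ u ∈ S, G.Adj v u → G.Adj w u) with hT
  have hTmem : ∀ w, w ∈ T ↔ (w ∈ S ∧ ∀ u ∈ S, G.Adj v u → G.Adj w u) := by
    intro w; simp [hT]
  have hw₀T : w₀ ∈ T := (hTmem w₀).mpr ⟨hw₀S, hsub₀⟩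
  obtain ⟨w, hwT, hmax⟩ := T.exists_max_image (fun x => (N x).card) ⟨w₀, hw₀T⟩
  obtain ⟨hwS, hwsub⟩ := (hTmem w).mp hwT
  have hNsub : N v ⊆ N w := by
    intro u hu
    rw [hNmem] at hu ⊢
    exact ⟨hu.1, hwsub u hu.1 hu.2⟩
  refine ⟨w, ⟨hwS, hvS, hwsub, ?_⟩, ?_⟩
  · -- strictness
    by_contra hno
    push_neg at hno
    have heq : N w = N v := by
      apply Finset.Subset.antisymm _ hNsub
      intro u hu
      rw [hNmem] at hu ⊢
      exact ⟨hu.1, hno u hu.1 hu.2⟩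
    have hss : N v ⊂ N w₀ := by
      rw [Finset.ssubset_iff_of_subset]
      · exact ⟨u₀, (hNmem w₀ u₀).mpr ⟨hu₀S, hadj₀⟩, fun hc => hnadj₀ ((hNmem v u₀).mp hc).2⟩
      · intro u hu
        rw [hNmem] at hu ⊢
        exact ⟨hu.1, hsub₀ u hu.1 hu.2⟩
    have h1 : (N v).card < (N w₀).card := Finset.card_lt_card hss
    have h2 : (N w₀).card ≤ (N w).card := hmax w₀ hw₀T
    rw [heq] at h2
    omega
  · -- w is not a strict corner of S
    rintro ⟨w', hw'S, _, hsub', u', hu'S, ha', hna'⟩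
    have hw'T : w' ∈ T := (hTmem w').mpr
      ⟨hw'S, fun u hu hadj => hsub' u hu (hwsub u hu hadj)⟩
    have hss : N w ⊂ N w' := by
      rw [Finset.ssubset_iff_of_subset]
      · exact ⟨u', (hNmem w' u').mpr ⟨hu'S, ha'⟩, fun hc => hna' ((hNmem w u').mp hc).2⟩
      · intro u hu
        rw [hNmem] at hu ⊢
        exact ⟨hu.1, hsub' u hu.1 hu.2⟩
    have h1 : (N w).card < (N w').card := Finset.card_lt_card hss
    have h2 : (N w').card ≤ (N w).card := hmax w' hw'T
    omega

lemma adj_step (G : RefGraph V) [Fintype V] (k : ℕ) (hk : 1 ≤ k)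
    (u u₁ : V) (huk : u ∈ G.GkSet k) (hu₁k : u₁ ∈ G.GkSet k)
    (hadj : G.Adj u u₁) {r' : V} (hr' : r' ∈ G.fk k u) :
    ∃ r₁' ∈ G.fk k u₁, G.Adj r' r₁' := by
  obtain ⟨m₀, rfl⟩ : ∃ m₀, k = m₀ + 1 := ⟨k - 1, (Nat.succ_pred_eq_of_pos hk).symm⟩
  -- r' ∈ G_{k+1}
  have hr'G : r' ∈ G.GkSet (m₀ + 2) := G.fk_subset (m₀+1) u hr'
  have hnc : ∀ j < m₀ + 1, ¬ G.IsCliqueSet (G.lvl j) := G.noClique_of_gk hr'G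
  have hnc' : ∀ j < m₀, ¬ G.IsCliqueSet (G.lvl j) := fun j hj => hnc j (by omega)
  have hSk : G.GkSet (m₀ + 1) = G.lvl m₀ := G.gk_eq_lvl hnc'
  have hSk1 : G.GkSet (m₀ + 2) = G.lvl (m₀ + 1) := G.gk_eq_lvl hnc
  -- key adjacency transfer: everything in G_k adjacent to u is adjacent to r'
  have hA : ∀ x ∈ G.GkSet (m₀+1), G.Adj u x → G.Adj r' x := by
    intro x hx hux
    unfold fk at hr'
    split_ifs at hr' with hcr
    · have : r' = u := hr'
      subst this; exact hux
    · exact hr'.2.2.2.1 x hx hux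
  by_cases hcr₁ : ((m₀+1 : ℕ) : ℕ∞) < G.cr u₁
  · -- u₁ survives: fk (m₀+1) u₁ = {u₁}
    refine ⟨u₁, ?_, hA u₁ hu₁k hadj⟩
    unfold fk
    rw [if_pos hcr₁]
    rfl
  · -- cr u₁ = m₀ + 1 exactly
    have hcr₁' : G.cr u₁ = ((m₀+1 : ℕ) : ℕ∞) := le_antisymm (not_lt.mp hcr₁) hu₁k
    -- extract the witness: u₁ is a strict corner of lvl m₀
    have hlt : G.cr u₁ < ((m₀+2 : ℕ) : ℕ∞) := by
      rw [hcr₁']; exact_mod_cast Nat.lt_succ_self (m₀+1)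
    have hnonempty := sInf_lt_iff.mp hlt
    obtain ⟨n, hn, hnlt⟩ := hnonempty
    have hge : ((m₀+1:ℕ) : ℕ∞) ≤ n := hcr₁' ▸ sInf_le hn
    obtain ⟨m, rfl, hmem, hprop⟩ := hn
    have hmeq : m = m₀ := by
      have h1' : m + 1 < m₀ + 2 := by exact_mod_cast hnlt
      have h2' : m₀ + 1 ≤ m + 1 := by exact_mod_cast hge
      omega
    rw [hmeq] at hmem hprop
    have hsc : G.IsStrictCorner (G.lvl m₀) u₁ := by
      rcases hprop with hsc | hcl
      · exact hsc
      · exact absurd hcl (hnc m₀ (by omega))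
    rw [← hSk] at hsc
    obtain ⟨w, hwcorner, hwnot⟩ := G.exists_max_corner (G.GkSet (m₀+1)) u₁ hsc
    -- w ∈ G_{k+1}
    have hwG : w ∈ G.GkSet (m₀ + 2) := by
      rw [hSk1]
      refine ⟨?_, ?_⟩
      · rw [← hSk]; exact hwcorner.1
      · rw [← hSk]; exact hwnot
    -- Adj w u, then Adj r' w
    have hwu : G.Adj w u := hwcorner.2.2.1 u huk (G.symm u u₁ hadj)
    have hsub21 : G.GkSet (m₀+2) ⊆ G.GkSet (m₀+1) := by
      intro x hx
      have hle : ((m₀+1:ℕ) : ℕ∞) ≤ ((m₀+2:ℕ) : ℕ∞) := by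
        exact_mod_cast Nat.le_succ (m₀+1)
      exact le_trans hle hx
    have hr'w : G.Adj r' w := hA w (hsub21 hwG) (G.symm w u hwu)
    refine ⟨w, ?_, hr'w⟩
    unfold fk
    rw [if_neg hcr₁]
    exact ⟨hwG, hwcorner⟩

lemma Fk_adj (G : RefGraph V) [Fintype V] (r₀ r₁ : V) (h01 : G.Adj r₀ r₁) :
    ∀ (k : ℕ), ∀ r' ∈ G.Fk (k+1) r₀, ∃ r₁' ∈ G.Fk (k+1) r₁, G.Adj r' r₁' := by
  intro k
  induction k with
  | zero =>
    intro r' hr'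
    have : r' = r₀ := hr'
    subst this
    exact ⟨r₁, rfl, h01⟩
  | succ k ih =>
    intro r' hr'
    rw [show G.Fk (k+2) r₀ = ⋃ x ∈ G.Fk (k+1) r₀, G.fk (k+1) x from rfl] at hr'
    simp only [Set.mem_iUnion] at hr'
    obtain ⟨u, hu, hr'⟩ := hr'
    obtain ⟨u₁, hu₁, huu₁⟩ := ih u hu
    have huk : u ∈ G.GkSet (k+1) := G.Fk_subset k r₀ hu
    have hu₁k : u₁ ∈ G.GkSet (k+1) := G.Fk_subset k r₁ hu₁
    obtain ⟨r₁', hr₁', hadj'⟩ := G.adj_step (k+1) (by omega) u u₁ huk hu₁k huu₁ hr'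
    refine ⟨r₁', ?_, hadj'⟩
    rw [show G.Fk (k+2) r₁ = ⋃ x ∈ G.Fk (k+1) r₁, G.fk (k+1) x from rfl]
    simp only [Set.mem_iUnion]
    exact ⟨u₁, hu₁, hr₁'⟩

end RefGraph

/-- For `k ≥ 1`, if the cop at `c` has `k`-cornered the robber at
`r₀`, then for every robber move `r₁ ∈ N[r₀]` there is a cop move `c₁ ∈ N[c]`
with `c₁ ∈ Fₖ(r₁)`, i.e. the cop `k`-catches the robber. -/
theorem k_cornered_to_k_caught
    {V : Type*} [Fintype V] [Nonempty V] (G : RefGraph V)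
    (k : ℕ) (hk : 1 ≤ k) (c r₀ : V) (h : G.kCornered k c r₀) :
    ∀ r₁ : V, G.Adj r₀ r₁ → ∃ c₁ : V, G.Adj c c₁ ∧ c₁ ∈ G.Fk k r₁ := by
  obtain ⟨m, rfl⟩ : ∃ m, k = m + 1 := ⟨k - 1, (Nat.succ_pred_eq_of_pos hk).symm⟩
  obtain ⟨r', hr'F, hcorner⟩ := h
  intro r₁ h01
  obtain ⟨c₁, hc₁F, hadj⟩ := G.Fk_adj r₀ r₁ h01 m r' hr'F
  have hc₁G : c₁ ∈ G.GkSet (m+1) := G.Fk_subset m r₁ hc₁F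
  exact ⟨c₁, hcorner c₁ (Or.inl hc₁G) hadj, hc₁F⟩
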